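/- (Least Action Principle) If α is an acceptable sequence of topplings that stabilizes η in a finite set V (i.e., after applying α every site of V has value 0 or ρ), and β is a legal sequence of topplings for η contained in V, then m_β(x) ≤ m_α(x) for every site x. -/

import Mathlib

namespace ARW

/-- The state of a site: `nat n` means `n` active particles, `rho` means one passive particle. -/
inductive Nrho where
  | nat : ℕ → Nrho
  | rho : Nrho
deriving DecidableEq

namespace Nrho

/-- Numerical value used to define the order `0 < ρ < 1 < 2 < ⋯`. -/
def val : Nrho → ℚ
  | nat n => (n : ℚ)
  | rho => 1/2

instance : LE Nrho := ⟨fun a b => a.val ≤ b.val⟩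
instance : LT Nrho := ⟨fun a b => a.val < b.val⟩

/-- Adding one particle: `ρ + 1 = 2`. -/
def addOne : Nrho → Nrho
  | nat n => nat (n + 1)
  | rho => nat 2

/-- Removing one particle (junk value on `0`): `ρ - 1 = 0`. -/
def subOne : Nrho → Nrho
  | nat n => nat (n - 1)
  | rho => nat 0

/-- The sleep operation `n ↦ n·ρ`: `1·ρ = ρ`, `n·ρ = n` for `n ≥ 2`, `ρ·ρ = ρ`
(junk value on `0`). -/
def sleep : Nrho → Nrho
  | nat 0 => nat 0
  | nat 1 => rho
  | nat (n + 2) => nat (n + 2)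
  | rho => rho

end Nrho

/-- An instruction at a site: jump to a given site, or fall asleep. -/
inductive Instr (S : Type) where
  | jump : S → Instr S
  | sleep : Instr S
deriving DecidableEq

/-- A configuration of the activated random walk system. -/
abbrev Config (S : Type) := S → Nrho

/-- A field of instructions `(τ^{x,j})`. -/
abbrev IField (S : Type) := S → ℕ → Instr S

variable {S : Type} [DecidableEq S]

/-- Apply one instruction at site `x`. -/
def applyInstr : Instr S → S → Config S → Config S
  | .jump y, x, η =>
      let η' := Function.update η x (η x).subOne
      Function.update η' y (η' y).addOne
  | .sleep, x, η => Function.update η x (η x).sleep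

/-- Topple site `x`: use the next unused instruction at `x` and increment the odometer. -/
def topple (I : IField S) : Config S × (S → ℕ) → S → Config S × (S → ℕ)
  | (η, h), x => (applyInstr (I x (h x)) x η, Function.update h x (h x + 1))

/-- Topple a finite sequence of sites, in order. -/
def toppleSeq (I : IField S) : Config S × (S → ℕ) → List S → Config S × (S → ℕ)
  | s, [] => s
  | s, x :: α => toppleSeq I (topple I s x) α

/-- `Phi I η α` is the configuration `Φ_α η` obtained from `η` by toppling
the sequence `α` (starting with odometer `0`). -/
def Phi (I : IField S) (η : Config S) (α : List S) : Config S :=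
  (toppleSeq I (η, fun _ => 0) α).1

/-- The sequence `α` is acceptable from the state `(η, h)`: each toppled site has value `≥ ρ`,
i.e. different from `0`, when it is toppled. -/
def AcceptableFrom (I : IField S) : Config S × (S → ℕ) → List S → Prop
  | _, [] => True
  | (η, h), x :: α => η x ≠ Nrho.nat 0 ∧ AcceptableFrom I (topple I (η, h) x) α

/-- The sequence `α` is legal from the state `(η, h)`: each toppled site is unstable,
i.e. has value `≥ 1`, when it is toppled. -/
def LegalFrom (I : IField S) : Config S × (S → ℕ) → List S → Prop
  | _, [] => True
  | (η, h), x :: α => Nrho.nat 1 ≤ η x ∧ LegalFrom I (topple I (η, h) x) α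

/-- `α` is an acceptable sequence of topplings for the configuration `η`. -/
def Acceptable (I : IField S) (η : Config S) (α : List S) : Prop :=
  AcceptableFrom I (η, fun _ => 0) α

/-- `α` is a legal sequence of topplings for the configuration `η`. -/
def Legal (I : IField S) (η : Config S) (α : List S) : Prop :=
  LegalFrom I (η, fun _ => 0) α

/-- Site `x` is stable for `η` if it carries no active particle. -/
def Stable (η : Config S) (x : S) : Prop := η x ≤ Nrho.rho

/-- `η` is stable in `V` if every site of `V` is stable. -/
def StableIn (η : Config S) (V : Finset S) : Prop := ∀ x ∈ V, Stable η x

section lemmas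
open Nrho

lemma one_le_iff {a : Nrho} : Nrho.nat 1 ≤ a ↔ ∃ n, 1 ≤ n ∧ a = .nat n := by
  constructor
  · intro h
    rcases a with n | _
    · exact ⟨n, by exact_mod_cast (show (1:ℚ) ≤ (n:ℚ) from h), rfl⟩
    · exact absurd (show (1:ℚ) ≤ 1/2 from h) (by norm_num)
  · rintro ⟨n, hn, rfl⟩
    show (1:ℚ) ≤ (n:ℚ)
    exact_mod_cast hn

lemma one_le_ne_zero {a : Nrho} (h : Nrho.nat 1 ≤ a) : a ≠ .nat 0 := by
  rcases one_le_iff.1 h with ⟨n, hn, rfl⟩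
  simp; omega

lemma one_le_addOne {a : Nrho} (h : Nrho.nat 1 ≤ a) : Nrho.nat 1 ≤ a.addOne := by
  rcases one_le_iff.1 h with ⟨n, hn, rfl⟩
  exact one_le_iff.2 ⟨n+1, by omega, rfl⟩

lemma one_le_addOne' (a : Nrho) : Nrho.nat 1 ≤ a.addOne := by
  cases a with
  | nat n => exact one_le_iff.2 ⟨n+1, by omega, rfl⟩
  | rho => exact one_le_iff.2 ⟨2, by omega, rfl⟩

lemma addOne_ne_zero (a : Nrho) : a.addOne ≠ .nat 0 := by
  cases a <;> simp [Nrho.addOne]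

lemma subOne_addOne {a : Nrho} (h : a ≠ .nat 0) : a.subOne.addOne = a.addOne.subOne := by
  rcases a with n | _
  · cases n with
    | zero => simp at h
    | succ m => simp [Nrho.subOne, Nrho.addOne]
  · simp [Nrho.subOne, Nrho.addOne]

lemma sleep_addOne {a : Nrho} (h : a ≠ .nat 0) : a.sleep.addOne = a.addOne.sleep := by
  rcases a with n | _
  · match n, h with
    | 1, _ => rfl
    | (m+2), _ => rfl
  · rfl

end lemmas


set_option maxHeartbeats 1000000 in
lemma apply_comm (i j : Instr S) (x y : S) (η : Config S) (hxy : x ≠ y)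
    (hx : Nrho.nat 1 ≤ η x) (hy : η y ≠ .nat 0) :
    applyInstr i x (applyInstr j y η) = applyInstr j y (applyInstr i x η) := by
  obtain ⟨n, hn, hxv⟩ := one_le_iff.1 hx
  obtain ⟨k, rfl⟩ : ∃ k, n = k + 1 := ⟨n - 1, by omega⟩
  have hyv : (∃ j, η y = .nat (j + 1)) ∨ η y = .rho := by
    rcases h : η y with m | _
    · rcases m with _ | m
      · exact absurd h hy
      · exact Or.inl ⟨m, rfl⟩
    · exact Or.inr rfl
  funext s
  cases i <;> cases j <;>
    simp only [applyInstr, Function.update_apply] <;>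
    split_ifs <;>
    subst_vars <;>
    first
      | rfl
      | (exact absurd rfl (by assumption))
      | (rcases k with _ | k <;> rcases hyv with ⟨m, hyv⟩ | hyv <;>
          (try rcases m with _ | m) <;>
          simp only [hxv, hyv, Nrho.addOne, Nrho.subOne, Nrho.sleep, Nrho.nat.injEq] <;>
          first | rfl | omega)

variable (I : IField S)

lemma apply_ne_zero {i : Instr S} {y x : S} (hxy : y ≠ x) {η : Config S}
    (hx : η x ≠ .nat 0) : applyInstr i y η x ≠ .nat 0 := by
  cases i with
  | jump w =>
    simp only [applyInstr, Function.update_apply]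
    split_ifs with h1 h2 h3
    · exact addOne_ne_zero _
    · exact addOne_ne_zero _
    · exact absurd h3.symm hxy
    · exact hx
  | sleep =>
    simp only [applyInstr, Function.update_apply]
    split_ifs with h1
    · exact absurd h1.symm hxy
    · exact hx

lemma apply_one_le {i : Instr S} {y x : S} (hxy : y ≠ x) {η : Config S}
    (hx : Nrho.nat 1 ≤ η x) : Nrho.nat 1 ≤ applyInstr i y η x := by
  cases i with
  | jump w =>
    simp only [applyInstr, Function.update_apply]
    split_ifs with h1 h2 h3
    · exact one_le_addOne' _
    · exact one_le_addOne' _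
    · exact absurd h3.symm hxy
    · exact hx
  | sleep =>
    simp only [applyInstr, Function.update_apply]
    split_ifs with h1
    · exact absurd h1.symm hxy
    · exact hx

lemma topple_fst (s : Config S × (S → ℕ)) (x : S) :
    (topple I s x).1 = applyInstr (I x (s.2 x)) x s.1 := by
  obtain ⟨η, h⟩ := s; rfl

lemma topple_one_le {y x : S} (hxy : y ≠ x) {s : Config S × (S → ℕ)}
    (hx : Nrho.nat 1 ≤ s.1 x) : Nrho.nat 1 ≤ (topple I s y).1 x := by
  rw [topple_fst]; exact apply_one_le hxy hx

lemma topple_comm (x y : S) (s : Config S × (S → ℕ)) (hxy : x ≠ y)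
    (hx : Nrho.nat 1 ≤ s.1 x) (hy : s.1 y ≠ .nat 0) :
    topple I (topple I s y) x = topple I (topple I s x) y := by
  obtain ⟨η, h⟩ := s
  simp only [topple, Function.update_apply]
  rw [if_neg hxy, if_neg (Ne.symm hxy)]
  exact Prod.ext (apply_comm _ _ x y η hxy hx hy)
    (Function.update_comm hxy _ _ h).symm

lemma one_le_toppleSeq (α : List S) (s : Config S × (S → ℕ)) (x : S) (hx : x ∉ α)
    (h1 : Nrho.nat 1 ≤ s.1 x) : Nrho.nat 1 ≤ (toppleSeq I s α).1 x := by
  induction α generalizing s with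
  | nil => exact h1
  | cons y γ ih =>
    simp only [List.mem_cons, not_or] at hx
    exact ih (topple I s y) hx.2 (topple_one_le I (Ne.symm hx.1) h1)

lemma bubble (α₁ : List S) (α₂ : List S) (x : S) (s : Config S × (S → ℕ))
    (hx : x ∉ α₁) (hu : Nrho.nat 1 ≤ s.1 x)
    (ha : AcceptableFrom I s (α₁ ++ x :: α₂)) :
    AcceptableFrom I s (x :: (α₁ ++ α₂)) ∧
      toppleSeq I s (x :: (α₁ ++ α₂)) = toppleSeq I s (α₁ ++ x :: α₂) := by
  induction α₁ generalizing s with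
  | nil => exact ⟨ha, rfl⟩
  | cons y γ ih =>
    simp only [List.mem_cons, not_or] at hx
    obtain ⟨hxy, hxγ⟩ := hx
    obtain ⟨η, h⟩ := s
    obtain ⟨hy0, ha'⟩ := ha
    have hu' : Nrho.nat 1 ≤ (topple I (η, h) y).1 x := topple_one_le I (Ne.symm hxy) hu
    obtain ⟨ihacc, ihseq⟩ := ih (topple I (η, h) y) hxγ hu' ha'
    have hswap := topple_comm I x y (η, h) hxy hu hy0
    have hy0' : (topple I (η, h) x).1 y ≠ .nat 0 := by
      rw [topple_fst]; exact apply_ne_zero hxy hy0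
    refine ⟨⟨one_le_ne_zero hu, hy0', ?_⟩, ?_⟩
    · show AcceptableFrom I (topple I (topple I (η, h) x) y) (γ ++ α₂)
      rw [← hswap]
      exact ihacc.2
    · show toppleSeq I (topple I (topple I (η, h) x) y) (γ ++ α₂)
        = toppleSeq I (topple I (η, h) y) (γ ++ x :: α₂)
      rw [← hswap, ← ihseq]
      rfl

lemma mem_split_first {x : S} : ∀ {l : List S}, x ∈ l →
    ∃ s t, l = s ++ x :: t ∧ x ∉ s := by
  intro l
  induction l with
  | nil => intro h; simp at h
  | cons y γ ih =>
    intro h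
    by_cases hxy : x = y
    · exact ⟨[], γ, by simp [hxy], by simp⟩
    · have hx' : x ∈ γ := by
        rcases List.mem_cons.1 h with h' | h'
        · exact absurd h' hxy
        · exact h'
      rcases ih hx' with ⟨s, t, rfl, hs⟩
      exact ⟨y :: s, t, rfl, by simp [hs, hxy]⟩

lemma main (V : Finset S) : ∀ (β α : List S) (s : Config S × (S → ℕ)),
    AcceptableFrom I s α → StableIn (toppleSeq I s α).1 V →
    LegalFrom I s β → (∀ x ∈ β, x ∈ V) → ∀ x, β.count x ≤ α.count x := by
  intro β
  induction β with
  | nil => intro α s _ _ _ _ x; simp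
  | cons z β' ih =>
    intro α s hα hstab hβ hβV x
    obtain ⟨η, h⟩ := s
    obtain ⟨hz1, hβ'⟩ := hβ
    have hzα : z ∈ α := by
      by_contra hne
      have h1le := one_le_toppleSeq I α (η, h) z hne hz1
      rcases one_le_iff.1 h1le with ⟨n, hn, he⟩
      have hle : ((n : ℚ)) ≤ 1/2 := by
        have hst := hstab z (hβV z (List.mem_cons_self (a := z) (l := β')))
        unfold Stable at hst
        rw [he] at hst
        exact hst
      have h1n : (1:ℚ) ≤ (n:ℚ) := by exact_mod_cast hn
      linarith
    obtain ⟨α₁, α₂, rfl, hzα₁⟩ := mem_split_first hzα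
    obtain ⟨hacc, hseq⟩ := bubble I α₁ α₂ z (η, h) hzα₁ hz1 hα
    have hstab' : StableIn (toppleSeq I (topple I (η, h) z) (α₁ ++ α₂)).1 V := by
      have he : toppleSeq I (topple I (η, h) z) (α₁ ++ α₂)
          = toppleSeq I (η, h) (α₁ ++ z :: α₂) := hseq
      rw [he]; exact hstab
    have hcount := ih (α₁ ++ α₂) (topple I (η, h) z) hacc.2 hstab' hβ'
      (fun y hy => hβV y (by simp [hy])) x
    have hc := hcount
    simp only [List.count_append] at hc
    rcases eq_or_ne x z with rfl | hxz
    · simp only [List.count_cons_self, List.count_append]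
      omega
    · simp only [List.count_cons_of_ne hxz.symm, List.count_append]
      omega

end ARW

open ARW in
/-- **Least Action Principle.** If `α` is an acceptable sequence of topplings stabilizing `η`
in the finite set `V`, and `β ⊆ V` is a legal sequence of topplings for `η`,
then `m_β(x) ≤ m_α(x)` for every site `x`. -/
theorem least_action_principle {S : Type} [DecidableEq S] (I : IField S) (η : Config S)
    (V : Finset S) (α β : List S)
    (hα : Acceptable I η α) (hstab : StableIn (Phi I η α) V)
    (hβ : Legal I η β) (hβV : ∀ x ∈ β, x ∈ V) :
    ∀ x, β.count x ≤ α.count x := by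
  exact ARW.main I V β α (η, fun _ => 0) hα hstab hβ hβV
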